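/- Let (X, μ) be a measure space and let ω ⊆ q be measurable sets with 0 < μ(ω) and μ(q) < ∞, μ(q) > 0. Then every v ∈ L²(q) satisfies ‖v‖²_{L²(q)} ≤ (1 + 2 μ(q)/μ(ω)) ‖v − ⟨v⟩_q‖²_{L²(q)} + 2 (μ(q)/μ(ω)) ‖v‖²_{L²(ω)}. -/

import Mathlib

open MeasureTheory Set

/-- The integral mean `⟨v⟩_A = μ(A)⁻¹ ∫_A v dμ`. -/
noncomputable def setMean {X : Type*} [MeasurableSpace X] (μ : Measure X)
    (A : Set X) (v : X → ℝ) : ℝ :=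
  (μ A).toReal⁻¹ * ∫ x in A, v x ∂μ

/-- Key estimate of Remark 4.5 ('Boundary'): the full `L²` norm over a region
`q` is controlled by the mean oscillation over `q` together with the `L²` norm
over a subregion `ω ⊆ q` of positive measure:
`‖v‖²_{L²(q)} ≤ (1 + 2 μ(q)/μ(ω)) ‖v − ⟨v⟩_q‖²_{L²(q)}
  + 2 (μ(q)/μ(ω)) ‖v‖²_{L²(ω)}`. -/
theorem stmt_7 {X : Type*} [MeasurableSpace X] (μ : Measure X)
    (ω q : Set X) (hωMeas : MeasurableSet ω) (hqMeas : MeasurableSet q)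
    (hsub : ω ⊆ q)
    (hω0 : 0 < μ ω) (hq0 : 0 < μ q) (hqfin : μ q < ⊤)
    (v : X → ℝ) (hv : MemLp v 2 (μ.restrict q)) :
    (∫ x in q, v x ^ 2 ∂μ)
      ≤ (1 + 2 * (μ q).toReal / (μ ω).toReal) *
            (∫ x in q, (v x - setMean μ q v) ^ 2 ∂μ)
        + 2 * ((μ q).toReal / (μ ω).toReal) * ∫ x in ω, v x ^ 2 ∂μ := by
  haveI : IsFiniteMeasure (μ.restrict q) :=
    ⟨by rw [Measure.restrict_apply_univ]; exact hqfin⟩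
  haveI : IsFiniteMeasure (μ.restrict ω) :=
    ⟨by rw [Measure.restrict_apply_univ]
        exact lt_of_le_of_lt (measure_mono hsub) hqfin⟩
  set m := setMean μ q v with hm
  have hQ : (0:ℝ) < (μ q).toReal := ENNReal.toReal_pos hq0.ne' hqfin.ne
  have hW : (0:ℝ) < (μ ω).toReal :=
    ENNReal.toReal_pos hω0.ne' (lt_of_le_of_lt (measure_mono hsub) hqfin).ne
  have hIntv : Integrable v (μ.restrict q) := hv.integrable (by norm_num)
  have hIntv2 : Integrable (fun x => v x ^ 2) (μ.restrict q) := by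
    simpa using hv.integrable_sq
  have hvm : MemLp (fun x => v x - m) 2 (μ.restrict q) := hv.sub (memLp_const m)
  have hIntvm2 : Integrable (fun x => (v x - m) ^ 2) (μ.restrict q) := by
    simpa using hvm.integrable_sq
  have hrle : μ.restrict ω ≤ μ.restrict q := Measure.restrict_mono hsub le_rfl
  have hIntv2ω : Integrable (fun x => v x ^ 2) (μ.restrict ω) := hIntv2.mono_measure hrle
  have hmean : ∫ x in q, v x ∂μ = m * (μ q).toReal := by
    rw [hm, setMean]; field_simp
  have hzero : ∫ x in q, (v x - m) ∂μ = 0 := by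
    rw [integral_sub hIntv (integrable_const m), setIntegral_const, smul_eq_mul, hmean]
    simp only [Measure.real]
    ring
  have hIntvm : Integrable (fun x => v x - m) (μ.restrict q) := hIntv.sub (integrable_const m)
  have hsplit : ∫ x in q, v x ^ 2 ∂μ
      = (∫ x in q, (v x - m) ^ 2 ∂μ) + m ^ 2 * (μ q).toReal := by
    have hpt : (fun x => v x ^ 2)
        = fun x => (v x - m) ^ 2 + ((2 * m) * (v x - m) + m ^ 2) := by
      funext x; ring
    have hg : Integrable (fun x => (2 * m) * (v x - m) + m ^ 2) (μ.restrict q) :=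
      (hIntvm.const_mul _).add (integrable_const _)
    have hcm : Integrable (fun x => (2 * m) * (v x - m)) (μ.restrict q) :=
      hIntvm.const_mul _
    rw [hpt, integral_add hIntvm2 hg, integral_add hcm (integrable_const _),
      integral_const_mul, hzero, setIntegral_const, smul_eq_mul]
    simp only [Measure.real]
    ring
  have hosc_mono : ∫ x in ω, (v x - m) ^ 2 ∂μ ≤ ∫ x in q, (v x - m) ^ 2 ∂μ :=
    setIntegral_mono_set hIntvm2 (Filter.Eventually.of_forall fun x => sq_nonneg _)
      (HasSubset.Subset.eventuallyLE hsub)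
  have hbound : m ^ 2 * (μ ω).toReal
      ≤ 2 * (∫ x in ω, v x ^ 2 ∂μ) + 2 * ∫ x in q, (v x - m) ^ 2 ∂μ := by
    have h1 : ∫ x in ω, (m : ℝ) ^ 2 ∂μ
        ≤ ∫ x in ω, (2 * v x ^ 2 + 2 * (v x - m) ^ 2) ∂μ := by
      apply integral_mono (integrable_const _)
        ((hIntv2ω.const_mul 2).add ((hIntvm2.mono_measure hrle).const_mul 2))
      intro x
      simp only [Pi.add_apply]
      nlinarith [sq_nonneg (v x + (v x - m))]
    have ha : Integrable (fun x => 2 * v x ^ 2) (μ.restrict ω) := hIntv2ω.const_mul 2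
    have hb : Integrable (fun x => 2 * (v x - m) ^ 2) (μ.restrict ω) :=
      (hIntvm2.mono_measure hrle).const_mul 2
    rw [setIntegral_const, smul_eq_mul, integral_add ha hb,
      integral_const_mul, integral_const_mul] at h1
    simp only [Measure.real] at h1
    nlinarith [hosc_mono]
  have key : m ^ 2 * (μ q).toReal
      ≤ (2 * (∫ x in ω, v x ^ 2 ∂μ) + 2 * ∫ x in q, (v x - m) ^ 2 ∂μ) *
          ((μ q).toReal / (μ ω).toReal) := by
    have h := mul_le_mul_of_nonneg_right hbound (le_of_lt (div_pos hQ hW))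
    calc m ^ 2 * (μ q).toReal
        = m ^ 2 * (μ ω).toReal * ((μ q).toReal / (μ ω).toReal) := by
          field_simp
      _ ≤ _ := h
  have hoscnn : 0 ≤ ∫ x in q, (v x - m) ^ 2 ∂μ :=
    integral_nonneg fun x => sq_nonneg _
  have key2 : m ^ 2 * (μ q).toReal
      ≤ 2 * ((μ q).toReal / (μ ω).toReal) * (∫ x in ω, v x ^ 2 ∂μ)
        + 2 * ((μ q).toReal / (μ ω).toReal) * ∫ x in q, (v x - m) ^ 2 ∂μ := by
    nlinarith [key]
  rw [hsplit]
  have h2 : 2 * (μ q).toReal / (μ ω).toReal = 2 * ((μ q).toReal / (μ ω).toReal) := by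
    ring
  rw [h2]
  nlinarith [key2, hoscnn]
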